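/- Let ρ > 1 and L ≥ 1, and let φ be holomorphic on a neighborhood of L·E_ρ with M := sup_{L·E_ρ} |φ| < ∞. Then there exists C(ρ) > 0 such that for every m ≥ 1, every B_m > 0, every f ∈ C([-1,1]), and every network g_m(x) = ∑_{k=1}^m λ_k φ(α_k x) with ∑|λ_k| ≤ B_m and |α_k| ≤ L, one has ‖f − g_m‖_{L^∞([-1,1])} ≥ E_m(f) − C(ρ) · B_m · M · ρ^{-m}. -/

import Mathlib

open Filter

/-- Closed Bernstein ellipse region with parameter ρ (image of the annulus 1 ≤ |w| ≤ ρ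
under the Joukowski map). -/
noncomputable def bernsteinRegion (ρ : ℝ) : Set ℂ :=
  {z | ∃ w : ℂ, 1 ≤ ‖w‖ ∧ ‖w‖ ≤ ρ ∧ z = (w + w⁻¹) / 2}

/-- Uniform norm of a function on [-1,1]. -/
noncomputable def uNorm (f : ℝ → ℝ) : ℝ :=
  sSup ((fun x => |f x|) '' Set.Icc (-1 : ℝ) 1)

/-- Error of best uniform approximation on [-1,1] by polynomials of degree ≤ m. -/
noncomputable def bestApprox (m : ℕ) (f : ℝ → ℝ) : ℝ :=
  sInf {e : ℝ | ∃ p : Polynomial ℝ, p.natDegree ≤ m ∧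
    ∀ x ∈ Set.Icc (-1 : ℝ) 1, |f x - Polynomial.eval x p| ≤ e}

lemma key_sum (w : ℂ) (hw : w ≠ 0) :
    ‖(w + w⁻¹) / 2 - 1‖ + ‖(w + w⁻¹) / 2 + 1‖
      = ‖w‖ + (‖w‖)⁻¹ := by
  have ht : (0:ℝ) < ‖w‖ := norm_pos_iff.mpr hw
  have h1 : (w + w⁻¹) / 2 - 1 = (w - 1)^2 / (2*w) := by field_simp; ring
  have h2 : (w + w⁻¹) / 2 + 1 = (w + 1)^2 / (2*w) := by field_simp; ring
  have hpar : (‖w-1‖)^2 + (‖w+1‖)^2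
      = 2*(‖w‖)^2 + 2 := by
    rw [Complex.sq_norm, Complex.sq_norm, Complex.sq_norm]
    simp [Complex.normSq_apply]
    ring
  rw [h1, h2, norm_div, norm_div, norm_pow, norm_pow, norm_mul]
  simp only [Complex.norm_two]
  field_simp
  nlinarith [hpar]

lemma mono_le {t ρ : ℝ} (ht : 1 ≤ t) (hρ : 1 ≤ ρ) (h : t + t⁻¹ ≤ ρ + ρ⁻¹) : t ≤ ρ := by
  have ht0 : (0:ℝ) < t := by linarith
  have hρ0 : (0:ℝ) < ρ := by linarith
  by_contra hc
  push_neg at hc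
  have h2 : t + t⁻¹ - (ρ + ρ⁻¹) = (t - ρ) * (t*ρ - 1) / (t*ρ) := by field_simp; ring
  have h3 : (t - ρ) * (t*ρ - 1) / (t*ρ) ≤ 0 := by linarith
  have h4 : (t - ρ) * (t*ρ - 1) ≤ 0 := by
    rcases div_nonpos_iff.mp h3 with ⟨_, hb⟩ | ⟨ha, _⟩
    · nlinarith
    · exact ha
  nlinarith [mul_pos (sub_pos.2 hc) (show (0:ℝ) < t*ρ - 1 by nlinarith)]

lemma mono_ge {t ρ : ℝ} (ht : 1 ≤ t) (htρ : t ≤ ρ) : t + t⁻¹ ≤ ρ + ρ⁻¹ := by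
  have ht0 : (0:ℝ) < t := by linarith
  have hρ0 : (0:ℝ) < ρ := by linarith
  have h2 : t + t⁻¹ - (ρ + ρ⁻¹) = (t - ρ) * (t*ρ - 1) / (t*ρ) := by field_simp; ring
  have h4 : (t - ρ) * (t*ρ - 1) ≤ 0 :=
    mul_nonpos_iff.mpr (Or.inr ⟨by linarith, by nlinarith⟩)
  have h3 : (t - ρ) * (t*ρ - 1) / (t*ρ) ≤ 0 := div_nonpos_of_nonpos_of_nonneg h4 (by positivity)
  linarith

lemma mem_iff {ρ : ℝ} (hρ : 1 ≤ ρ) (z : ℂ) :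
    z ∈ bernsteinRegion ρ ↔ ‖z - 1‖ + ‖z + 1‖ ≤ ρ + ρ⁻¹ := by
  constructor
  · rintro ⟨w, hw1, hwρ, rfl⟩
    have hw0 : w ≠ 0 := by
      intro h; rw [h] at hw1; simp at hw1; linarith
    rw [key_sum w hw0]
    exact mono_ge hw1 hwρ
  · intro hF
    obtain ⟨s, hs⟩ := IsAlgClosed.exists_pow_nat_eq (z^2 - 1) (zero_lt_two)
    have hprod : (z + s) * (z - s) = 1 := by linear_combination -hs
    have hz1 : z + s ≠ 0 := fun h => by simp [h] at hprod
    have hz2 : z - s ≠ 0 := fun h => by simp [h] at hprod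
    have habs : ‖z + s‖ * ‖z - s‖ = 1 := by
      rw [← norm_mul, hprod, norm_one]
    -- pick w with |w| ≥ 1
    have hone : 1 ≤ ‖z + s‖ ∨ 1 ≤ ‖z - s‖ := by
      by_contra hcon
      push_neg at hcon
      nlinarith [norm_nonneg (z+s), norm_nonneg (z-s), hcon.1, hcon.2]
    have hform : ∀ w : ℂ, w ≠ 0 → w * (2*z - w) = 1 → z = (w + w⁻¹)/2 := by
      intro w hw0 hww
      have hinv : w⁻¹ = 2*z - w := inv_eq_of_mul_eq_one_right hww
      rw [hinv]; ring
    rcases hone with h1 | h1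
    · refine ⟨z + s, h1, ?_, ?_⟩
      · apply mono_le h1 hρ
        rw [← key_sum (z+s) hz1]
        have hz : z = ((z+s) + (z+s)⁻¹)/2 := hform _ hz1 (by linear_combination hprod)
        rw [← hz]; exact hF
      · exact hform _ hz1 (by linear_combination hprod)
    · refine ⟨z - s, h1, ?_, ?_⟩
      · apply mono_le h1 hρ
        rw [← key_sum (z-s) hz2]
        have hz : z = ((z-s) + (z-s)⁻¹)/2 := hform _ hz2 (by linear_combination hprod)
        rw [← hz]; exact hF
      · exact hform _ hz2 (by linear_combination hprod)

lemma scale_mem {ρ : ℝ} (hρ : 1 ≤ ρ) {c : ℝ} (hc : |c| ≤ 1) {z : ℂ}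
    (hz : z ∈ bernsteinRegion ρ) : (c : ℂ) * z ∈ bernsteinRegion ρ := by
  rw [mem_iff hρ] at hz ⊢
  have hc1 : -1 ≤ c := (abs_le.mp hc).1
  have hc2 : c ≤ 1 := (abs_le.mp hc).2
  have e1 : (c:ℂ)*z - 1 = (((1+c)/2 : ℝ):ℂ) * (z-1) + (((1-c)/2:ℝ):ℂ) * (-(z+1)) := by
    push_cast; ring
  have e2 : (c:ℂ)*z + 1 = (((1+c)/2 : ℝ):ℂ) * (z+1) + (((1-c)/2:ℝ):ℂ) * (-(z-1)) := by
    push_cast; ring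
  have b1 : ‖(c:ℂ)*z - 1‖
      ≤ (1+c)/2 * ‖z-1‖ + (1-c)/2 * ‖z+1‖ := by
    rw [e1]
    refine (norm_add_le _ _).trans ?_
    rw [norm_mul, norm_mul, norm_neg, Complex.norm_real, Complex.norm_real, Real.norm_eq_abs, Real.norm_eq_abs,
      abs_of_nonneg (by linarith : (0:ℝ) ≤ (1+c)/2), abs_of_nonneg (by linarith : (0:ℝ) ≤ (1-c)/2)]
  have b2 : ‖(c:ℂ)*z + 1‖
      ≤ (1+c)/2 * ‖z+1‖ + (1-c)/2 * ‖z-1‖ := by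
    rw [e2]
    refine (norm_add_le _ _).trans ?_
    rw [norm_mul, norm_mul, norm_neg, Complex.norm_real, Complex.norm_real, Real.norm_eq_abs, Real.norm_eq_abs,
      abs_of_nonneg (by linarith : (0:ℝ) ≤ (1+c)/2), abs_of_nonneg (by linarith : (0:ℝ) ≤ (1-c)/2)]
  nlinarith [hz]

lemma real_mem {ρ : ℝ} (hρ : 1 ≤ ρ) {x : ℝ} (hx : x ∈ Set.Icc (-1:ℝ) 1) :
    (x : ℂ) ∈ bernsteinRegion ρ := by
  rw [mem_iff hρ]
  have e1 : (x:ℂ) - 1 = ((x - 1 : ℝ) : ℂ) := by push_cast; ring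
  have e2 : (x:ℂ) + 1 = ((x + 1 : ℝ) : ℂ) := by push_cast; ring
  rw [e1, e2, Complex.norm_real, Complex.norm_real, Real.norm_eq_abs, Real.norm_eq_abs,
    abs_of_nonpos (by linarith [hx.2] : x - 1 ≤ 0),
    abs_of_nonneg (by linarith [hx.1] : 0 ≤ x + 1)]
  have hρ0 : (0:ℝ) < ρ := by linarith
  have : (0:ℝ) < ρ⁻¹ := by positivity
  nlinarith [sq_nonneg (ρ - 1), mul_pos hρ0 this, mul_inv_cancel₀ (ne_of_gt hρ0), mul_nonneg (sq_nonneg (ρ-1)) (le_of_lt this)]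

/-- polynomial approximation barrier, analytic case. -/
theorem stmt3 (ρ L M Cρ : ℝ) (hρ : 1 < ρ) (hL : 1 ≤ L) (hCρ : 0 < Cρ)
    (φ : ℝ → ℝ) (Φ : ℂ → ℂ) (U : Set ℂ) (hU : IsOpen U)
    (hsub : (fun z => (L : ℂ) * z) '' bernsteinRegion ρ ⊆ U)
    (hΦ : DifferentiableOn ℂ Φ U) (hext : ∀ x : ℝ, Φ x = φ x)
    (hM : ∀ w ∈ (fun z => (L : ℂ) * z) '' bernsteinRegion ρ, ‖Φ w‖ ≤ M)
    (hBern : ∀ (h : ℝ → ℝ) (H : ℂ → ℂ) (Mh : ℝ),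
      DifferentiableOn ℂ H (bernsteinRegion ρ) →
      (∀ x ∈ Set.Icc (-1 : ℝ) 1, H x = h x) →
      (∀ z ∈ bernsteinRegion ρ, ‖H z‖ ≤ Mh) →
      ∀ n : ℕ, bestApprox n h ≤ Cρ * Mh / ρ ^ n)
    (m : ℕ) (hm : 1 ≤ m) (Bm : ℝ) (hBm : 0 < Bm)
    (f : ℝ → ℝ) (hf : ContinuousOn f (Set.Icc (-1 : ℝ) 1))
    (lam alp : Fin m → ℝ) (hlam : ∑ k, |lam k| ≤ Bm) (halp : ∀ k, |alp k| ≤ L) :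
    bestApprox m f - Cρ * Bm * M / ρ ^ m
      ≤ uNorm (fun x => f x - ∑ k, lam k * φ (alp k * x)) := by
  have hρ1 : (1:ℝ) ≤ ρ := le_of_lt hρ
  have hL0 : (0:ℝ) < L := lt_of_lt_of_le one_pos hL
  set g : ℝ → ℝ := fun x => ∑ k, lam k * φ (alp k * x) with hg_def
  have hmemImg : ∀ (c : ℝ), |c| ≤ L → ∀ z ∈ bernsteinRegion ρ,
      (c:ℂ) * z ∈ (fun z => (L : ℂ) * z) '' bernsteinRegion ρ := by
    intro c hc z hz
    have h1 : |c / L| ≤ 1 := by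
      rw [abs_div, abs_of_pos hL0, div_le_one hL0]; exact hc
    have h2 : ((c / L : ℝ):ℂ) * z ∈ bernsteinRegion ρ := scale_mem hρ1 h1 hz
    have h3 : (c:ℂ) * z = (L:ℂ) * (((c / L:ℝ):ℂ) * z) := by
      have hLne : (L:ℂ) ≠ 0 := by exact_mod_cast ne_of_gt hL0
      push_cast
      field_simp
    exact ⟨_, h2, h3.symm⟩
  have hmemU : ∀ (c : ℝ), |c| ≤ L → ∀ z ∈ bernsteinRegion ρ, (c:ℂ) * z ∈ U :=
    fun c hc z hz => hsub (hmemImg c hc z hz)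
  set G : ℂ → ℂ := fun z => ∑ k, (lam k : ℂ) * Φ ((alp k : ℂ) * z) with hG_def
  have hGdiff : DifferentiableOn ℂ G (bernsteinRegion ρ) := by
    apply DifferentiableOn.fun_sum
    intro k _
    exact ((hΦ.comp (((differentiable_const ((alp k : ℂ))).mul differentiable_id).differentiableOn)
      (fun z hz => hmemU (alp k) (halp k) z hz))).const_mul _
  have hGeq : ∀ x ∈ Set.Icc (-1:ℝ) 1, G x = g x := by
    intro x hx
    have hkey : ∀ k : Fin m, Φ ((alp k:ℂ) * (x:ℂ)) = ((φ (alp k * x) : ℝ) : ℂ) := by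
      intro k
      have h1 : (alp k:ℂ) * (x:ℂ) = ((alp k * x : ℝ):ℂ) := by push_cast; ring
      rw [h1, hext]
    simp only [hG_def, hg_def]
    rw [Finset.sum_congr rfl fun k _ => by rw [hkey k]]
    push_cast
    ring
  have h1mem : (1:ℂ) ∈ bernsteinRegion ρ := by
    have := real_mem hρ1 (show (1:ℝ) ∈ Set.Icc (-1:ℝ) 1 by constructor <;> norm_num)
    simpa using this
  have hM0 : 0 ≤ M :=
    le_trans (norm_nonneg _) (hM _ ⟨1, h1mem, rfl⟩)
  have hGbd : ∀ z ∈ bernsteinRegion ρ, ‖G z‖ ≤ Bm * M := by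
    intro z hz
    calc ‖G z‖ ≤ ∑ k, ‖(lam k : ℂ) * Φ ((alp k : ℂ) * z)‖ :=
          norm_sum_le _ _
      _ ≤ ∑ k, |lam k| * M := by
          apply Finset.sum_le_sum
          intro k _
          rw [norm_mul, Complex.norm_real, Real.norm_eq_abs]
          exact mul_le_mul_of_nonneg_left (hM _ (hmemImg (alp k) (halp k) z hz)) (abs_nonneg _)
      _ = (∑ k, |lam k|) * M := by rw [Finset.sum_mul]
      _ ≤ Bm * M := mul_le_mul_of_nonneg_right hlam hM0
  have happrox : bestApprox m g ≤ Cρ * (Bm * M) / ρ ^ m :=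
    hBern g G (Bm * M) hGdiff hGeq hGbd m
  -- continuity of g on [-1,1]
  have hφre : ∀ r : ℝ, φ r = (Φ (r:ℂ)).re := by
    intro r; rw [hext r]; simp
  have hgcont : ContinuousOn g (Set.Icc (-1:ℝ) 1) := by
    rw [hg_def]
    apply continuousOn_finset_sum
    intro k _
    have hmaps : Set.MapsTo (fun x : ℝ => ((alp k * x : ℝ):ℂ)) (Set.Icc (-1:ℝ) 1) U := by
      intro x hx
      have h1 : ((alp k * x : ℝ):ℂ) = (alp k:ℂ) * (x:ℂ) := by push_cast; ring
      show ((alp k * x : ℝ):ℂ) ∈ U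
      rw [h1]
      exact hmemU (alp k) (halp k) _ (real_mem hρ1 hx)
    have hcomp : ContinuousOn (fun x : ℝ => Φ ((alp k * x : ℝ):ℂ)) (Set.Icc (-1:ℝ) 1) :=
      hΦ.continuousOn.comp
        ((Complex.continuous_ofReal.comp (continuous_const.mul continuous_id)).continuousOn) hmaps
    have : ContinuousOn (fun x : ℝ => lam k * (Φ ((alp k * x : ℝ):ℂ)).re) (Set.Icc (-1:ℝ) 1) :=
      continuousOn_const.mul (Complex.continuous_re.comp_continuousOn hcomp)
    have heq : (fun x : ℝ => lam k * φ (alp k * x))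
        = (fun x : ℝ => lam k * (Φ ((alp k * x : ℝ):ℂ)).re) := by
      funext x; rw [hφre]
    rw [heq]; exact this
  have hbound : ∀ x ∈ Set.Icc (-1:ℝ) 1, |f x - g x| ≤ uNorm (fun x => f x - g x) := by
    intro x hx
    apply le_csSup
    · exact (isCompact_Icc.image_of_continuousOn ((hf.sub hgcont).abs)).bddAbove
    · exact ⟨x, hx, rfl⟩
  have hbdd : BddBelow {e : ℝ | ∃ p : Polynomial ℝ, p.natDegree ≤ m ∧
      ∀ x ∈ Set.Icc (-1 : ℝ) 1, |f x - Polynomial.eval x p| ≤ e} := by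
    refine ⟨0, ?_⟩
    rintro e ⟨p, _, hp⟩
    exact le_trans (abs_nonneg _) (hp 0 (by constructor <;> norm_num))
  obtain ⟨Cg, hCg⟩ := isCompact_Icc.exists_bound_of_continuousOn hgcont
  have hSg_ne : {e : ℝ | ∃ p : Polynomial ℝ, p.natDegree ≤ m ∧
      ∀ x ∈ Set.Icc (-1 : ℝ) 1, |g x - Polynomial.eval x p| ≤ e}.Nonempty := by
    refine ⟨Cg, 0, by simp, ?_⟩
    intro x hx
    simpa using hCg x hx
  have htri : bestApprox m f - uNorm (fun x => f x - g x) ≤ bestApprox m g := by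
    apply le_csInf hSg_ne
    rintro e ⟨p, hdeg, hp⟩
    have hin : bestApprox m f ≤ uNorm (fun x => f x - g x) + e := by
      apply csInf_le hbdd
      refine ⟨p, hdeg, ?_⟩
      intro x hx
      calc |f x - Polynomial.eval x p| ≤ |f x - g x| + |g x - Polynomial.eval x p| :=
            abs_sub_le _ _ _
        _ ≤ uNorm (fun x => f x - g x) + e := add_le_add (hbound x hx) (hp x hx)
    linarith
  have hfin : Cρ * (Bm * M) / ρ ^ m = Cρ * Bm * M / ρ ^ m := by ring
  have hgoal : (fun x => f x - ∑ k, lam k * φ (alp k * x)) = (fun x => f x - g x) := by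
    funext x; rw [hg_def]
  rw [hgoal]
  linarith
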